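/- The number of monic irreducible polynomials of degree 5 in F_9[x] whose coefficient of x⁴ and coefficient of x are both zero equals 160. That is, Ī_9(5,0,0) = 160. -/

import Mathlib

/-! Auxiliary: a concrete computable field `Fc` with 9 elements. -/

structure Fc where
  x : ZMod 3
  y : ZMod 3
deriving DecidableEq, Fintype

namespace Fc

instance : Zero Fc := ⟨⟨0, 0⟩⟩
instance : One Fc := ⟨⟨1, 0⟩⟩
instance : Add Fc := ⟨fun a b => ⟨a.x + b.x, a.y + b.y⟩⟩
instance : Neg Fc := ⟨fun a => ⟨-a.x, -a.y⟩⟩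
instance : Mul Fc := ⟨fun a b => ⟨a.x * b.x - a.y * b.y, a.x * b.y + a.y * b.x⟩⟩

set_option maxHeartbeats 4000000 in
instance : CommRing Fc where
  add := (· + ·)
  zero := 0
  neg := Neg.neg
  mul := (· * ·)
  one := 1
  nsmul := nsmulRec
  zsmul := zsmulRec
  add_assoc := by decide
  zero_add := by decide
  add_zero := by decide
  add_comm := by decide
  neg_add_cancel := by decide
  mul_assoc := by decide
  one_mul := by decide
  mul_one := by decide
  left_distrib := by decide
  right_distrib := by decide
  mul_comm := by decide
  zero_mul := by decide
  mul_zero := by decide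

lemma card_eq : Fintype.card Fc = 9 := by decide

/-- The computable criterion: `(a0, a2, a3)` gives an irreducible
`X^5 + a3 X^3 + a2 X^2 + a0` iff it has no root and no monic quadratic factor. -/
def D (v : Fc × Fc × Fc) : Prop :=
  (∀ t : Fc, t^5 + v.2.2*t^3 + v.2.1*t^2 + v.1 ≠ 0) ∧
  (∀ b c : Fc, ¬(b^4 - 3*b^2*c + c^2 + v.2.2*(b^2-c) - v.2.1*b = 0 ∧
      v.1 + b^3*c - 2*b*c^2 + v.2.2*b*c - v.2.1*c = 0))

instance : DecidablePred D := fun v => by unfold D; infer_instance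

set_option maxHeartbeats 8000000 in
set_option maxRecDepth 100000 in
lemma count : Fintype.card {v : Fc × Fc × Fc // D v} = 160 := by decide

noncomputable instance : Field Fc := by
  have hIsField : IsField Fc := by
    constructor
    · exact ⟨0, 1, by decide⟩
    · exact mul_comm
    · intro a ha
      have : ∃ b : Fc, a * b = 1 := by revert ha; revert a; decide
      exact this
  exact hIsField.toField

end Fc

/-! Auxiliary: representation of monic quintics with vanishing `x⁴`, `x` coefficients. -/

open Polynomial

variable {K : Type} [Field K]

noncomputable def pc (a0 a2 a3 : K) : K[X] := X^5 + C a3 * X^3 + C a2 * X^2 + C a0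

lemma pc_natDegree (a0 a2 a3 : K) : (pc a0 a2 a3).natDegree = 5 := by
  unfold pc; compute_degree!

lemma pc_monic (a0 a2 a3 : K) : (pc a0 a2 a3).Monic := by
  unfold pc; monicity!

lemma pc_coeff (a0 a2 a3 : K) : (pc a0 a2 a3).coeff 0 = a0 ∧ (pc a0 a2 a3).coeff 1 = 0 ∧
    (pc a0 a2 a3).coeff 2 = a2 ∧ (pc a0 a2 a3).coeff 3 = a3 ∧ (pc a0 a2 a3).coeff 4 = 0 := by
  unfold pc
  simp [coeff_add, coeff_C_mul, coeff_X_pow, coeff_C]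

lemma key (a0 a2 a3 b c : K) : pc a0 a2 a3 =
    (X^2 + C b * X + C c) * (X^3 - C b * X^2 + C (b^2 - c + a3) * X + C (a2 + 2*b*c - a3*b - b^3))
    + (C (b^4 - 3*b^2*c + c^2 + a3*(b^2-c) - a2*b) * X + C (a0 + b^3*c - 2*b*c^2 + a3*b*c - a2*c)) := by
  unfold pc
  simp only [map_add, map_sub, map_mul, map_pow, map_ofNat]
  ring

lemma pc_eval (a0 a2 a3 t : K) : (pc a0 a2 a3).eval t = t^5 + a3*t^3 + a2*t^2 + a0 := by
  simp [pc]

lemma quad_dvd_iff (a0 a2 a3 b c : K) :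
    (X^2 + C b * X + C c) ∣ pc a0 a2 a3 ↔
      (b^4 - 3*b^2*c + c^2 + a3*(b^2-c) - a2*b = 0 ∧
        a0 + b^3*c - 2*b*c^2 + a3*b*c - a2*c = 0) := by
  set g : K[X] := X^2 + C b * X + C c with hg
  have hdeg : g.degree = 2 := by rw [hg]; compute_degree!
  set r1 : K := b^4 - 3*b^2*c + c^2 + a3*(b^2-c) - a2*b with hr1
  set r0 : K := a0 + b^3*c - 2*b*c^2 + a3*b*c - a2*c with hr0
  constructor
  · intro h
    have h2 : g ∣ (C r1 * X + C r0) := by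
      have := key a0 a2 a3 b c
      have h3 : g ∣ g * (X^3 - C b * X^2 + C (b^2 - c + a3) * X
          + C (a2 + 2*b*c - a3*b - b^3)) := Dvd.intro _ rfl
      have := (dvd_add_right h3).mp (this ▸ h)
      exact this
    have h0 : (C r1 * X + C r0) = 0 := by
      refine Polynomial.eq_zero_of_dvd_of_degree_lt h2 ?_
      refine lt_of_le_of_lt (degree_linear_le) ?_
      rw [hdeg]; norm_num
    constructor
    · have := congrArg (fun p => Polynomial.coeff p 1) h0
      simpa using this
    · have := congrArg (fun p => Polynomial.coeff p 0) h0
      simpa using this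
  · rintro ⟨h1, h0⟩
    refine ⟨X^3 - C b * X^2 + C (b^2 - c + a3) * X + C (a2 + 2*b*c - a3*b - b^3), ?_⟩
    rw [key a0 a2 a3 b c, ← hr1, ← hr0, h1, h0]
    simp [hg]

lemma monic_two_eq {p : K[X]} (hm : p.Monic) (h : p.natDegree = 2) :
    p = X^2 + C (p.coeff 1) * X + C (p.coeff 0) := by
  ext n
  have hlc : p.coeff 2 = 1 := by
    have := hm.leadingCoeff
    rwa [leadingCoeff, h] at this
  match n with
  | 0 => simp [coeff_add, coeff_C_mul, coeff_X_pow, coeff_C]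
  | 1 => simp [coeff_add, coeff_C_mul, coeff_X_pow, coeff_C]
  | 2 => simpa [coeff_add, coeff_C_mul, coeff_X_pow, coeff_C] using hlc
  | (n+3) =>
    have h3 : p.coeff (n+3) = 0 := coeff_eq_zero_of_natDegree_lt (by omega)
    simp [coeff_add, coeff_C_mul, coeff_X_pow, coeff_C, h3]

lemma pc_irred_iff (a0 a2 a3 : K) :
    Irreducible (pc a0 a2 a3) ↔
      ((∀ t : K, t^5 + a3*t^3 + a2*t^2 + a0 ≠ 0) ∧
       ∀ b c : K, ¬(b^4 - 3*b^2*c + c^2 + a3*(b^2-c) - a2*b = 0 ∧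
          a0 + b^3*c - 2*b*c^2 + a3*b*c - a2*c = 0)) := by
  have hne : pc a0 a2 a3 ≠ 0 := (pc_monic a0 a2 a3).ne_zero
  constructor
  · intro h
    constructor
    · intro t ht
      have hr : (X - C t) ∣ pc a0 a2 a3 := by
        rw [dvd_iff_isRoot]
        rw [IsRoot, pc_eval]; exact ht
      obtain ⟨q, hq⟩ := hr
      rcases h.isUnit_or_isUnit hq with h1 | h2
      · exact not_isUnit_X_sub_C t h1
      · have hq0 : q ≠ 0 := fun h0 => hne (by rw [hq, h0, mul_zero])
        have : (pc a0 a2 a3).natDegree = 1 := by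
          rw [hq, natDegree_mul (X_sub_C_ne_zero t) hq0,
            natDegree_X_sub_C, natDegree_eq_zero_of_isUnit h2]
        rw [pc_natDegree] at this; omega
    · rintro b c ⟨h1, h0⟩
      obtain ⟨q, hq⟩ := (quad_dvd_iff a0 a2 a3 b c).mpr ⟨h1, h0⟩
      have hgd : (X^2 + C b * X + C c : K[X]).natDegree = 2 := by compute_degree!
      rcases h.isUnit_or_isUnit hq with hu | hu
      · exact not_isUnit_of_natDegree_pos _ (by omega) hu
      · have hg0 : (X^2 + C b * X + C c : K[X]) ≠ 0 := fun h0 => by simp [h0] at hgd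
        have hq0 : q ≠ 0 := fun h0 => hne (by rw [hq, h0, mul_zero])
        have : (pc a0 a2 a3).natDegree = 2 := by
          rw [hq, natDegree_mul hg0 hq0, hgd, natDegree_eq_zero_of_isUnit hu]
        rw [pc_natDegree] at this; omega
  · rintro ⟨hroot, hquad⟩
    refine ⟨not_isUnit_of_natDegree_pos _ (by rw [pc_natDegree]; omega), fun u v huv => ?_⟩
    by_contra hcon
    push_neg at hcon
    obtain ⟨hu, hv⟩ := hcon
    have hu0 : u ≠ 0 := fun h0 => hne (by rw [huv, h0, zero_mul])
    have hv0 : v ≠ 0 := fun h0 => hne (by rw [huv, h0, mul_zero])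
    have hsum : u.natDegree + v.natDegree = 5 := by
      rw [← natDegree_mul hu0 hv0, ← huv, pc_natDegree]
    have hdeg_pos : ∀ w : K[X], w ≠ 0 → ¬IsUnit w → 1 ≤ w.natDegree := by
      intro w hw0 hwu
      by_contra hh
      push_neg at hh
      have hw' : w.natDegree = 0 := by omega
      obtain ⟨a, ha⟩ := natDegree_eq_zero.mp hw'
      have ha0 : a ≠ 0 := fun h0 => hw0 (by rw [← ha, h0, map_zero])
      exact hwu (ha ▸ isUnit_C.mpr (isUnit_iff_ne_zero.mpr ha0))
    have hu1 := hdeg_pos u hu0 hu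
    have hv1 := hdeg_pos v hv0 hv
    obtain ⟨w, hw0, hwdvd, hwd⟩ : ∃ w : K[X], w ≠ 0 ∧ w ∣ pc a0 a2 a3 ∧
        (w.natDegree = 1 ∨ w.natDegree = 2) := by
      rcases le_or_gt u.natDegree 2 with hle | hlt
      · refine ⟨u, hu0, ⟨v, huv⟩, ?_⟩; omega
      · refine ⟨v, hv0, ⟨u, by rw [huv, mul_comm]⟩, ?_⟩; omega
    set m : K[X] := w * C (w.leadingCoeff)⁻¹ with hmdef
    have hm : m.Monic := monic_mul_leadingCoeff_inv hw0
    have hlc : (w.leadingCoeff)⁻¹ ≠ 0 := by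
      simp [leadingCoeff_ne_zero.mpr hw0]
    have hmd : m.natDegree = w.natDegree := natDegree_mul_C hlc
    have hmw : m * C w.leadingCoeff = w := by
      rw [hmdef, mul_assoc, ← C_mul, inv_mul_cancel₀ (leadingCoeff_ne_zero.mpr hw0), C_1, mul_one]
    have hmdvd : m ∣ pc a0 a2 a3 := dvd_trans ⟨C w.leadingCoeff, hmw.symm⟩ hwdvd
    rcases hmd.symm ▸ hwd with h1 | h2
    · have hmx : m = X + C (m.coeff 0) := hm.eq_X_add_C h1
      have : (pc a0 a2 a3).eval (-(m.coeff 0)) = 0 := by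
        refine eval_eq_zero_of_dvd_of_eval_eq_zero hmdvd ?_
        rw [hmx]; simp
      rw [pc_eval] at this
      exact hroot _ this
    · have hmx := monic_two_eq hm h2
      have := (quad_dvd_iff a0 a2 a3 (m.coeff 1) (m.coeff 0)).mp (hmx ▸ hmdvd)
      exact hquad _ _ this

lemma pc_repr {f : K[X]} (hm : f.Monic) (hd : f.natDegree = 5) (h4 : f.coeff 4 = 0)
    (h1 : f.coeff 1 = 0) : f = pc (f.coeff 0) (f.coeff 2) (f.coeff 3) := by
  have h5 : f.coeff 5 = 1 := by
    have := hm.leadingCoeff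
    rwa [leadingCoeff, hd] at this
  ext n
  match n with
  | 0 => simp [pc, coeff_add, coeff_C_mul, coeff_X_pow, coeff_C]
  | 1 => simpa [pc, coeff_add, coeff_C_mul, coeff_X_pow, coeff_C] using h1
  | 2 => simp [pc, coeff_add, coeff_C_mul, coeff_X_pow, coeff_C]
  | 3 => simp [pc, coeff_add, coeff_C_mul, coeff_X_pow, coeff_C]
  | 4 => simpa [pc, coeff_add, coeff_C_mul, coeff_X_pow, coeff_C] using h4
  | 5 => simpa [pc, coeff_add, coeff_C_mul, coeff_X_pow, coeff_C] using h5
  | (n+6) =>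
    have h6 : f.coeff (n+6) = 0 := coeff_eq_zero_of_natDegree_lt (by omega)
    simp [pc, coeff_add, coeff_C_mul, coeff_X_pow, coeff_C, h6]

/-- The subtype of good quintics is equivalent to the triple of coefficients. -/
noncomputable def quinticEquiv (K : Type) [Field K] :
    {f : Polynomial K // f.Monic ∧ Irreducible f ∧ f.natDegree = 5 ∧
      f.coeff 4 = 0 ∧ f.coeff 1 = 0} ≃
    {v : K × K × K // Irreducible (pc v.1 v.2.1 v.2.2)} where
  toFun f := ⟨(f.1.coeff 0, f.1.coeff 2, f.1.coeff 3), by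
    have := pc_repr f.2.1 f.2.2.2.1 f.2.2.2.2.1 f.2.2.2.2.2
    rw [← this]; exact f.2.2.1⟩
  invFun v := ⟨pc v.1.1 v.1.2.1 v.1.2.2, pc_monic _ _ _, v.2, pc_natDegree _ _ _,
    (pc_coeff _ _ _).2.2.2.2, (pc_coeff _ _ _).2.1⟩
  left_inv f := Subtype.ext (pc_repr f.2.1 f.2.2.2.1 f.2.2.2.2.1 f.2.2.2.2.2).symm
  right_inv v := by
    apply Subtype.ext
    have h := pc_coeff v.1.1 v.1.2.1 v.1.2.2
    exact Prod.ext h.1 (Prod.ext h.2.2.1 h.2.2.2.1)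

/-- `Ī_9(5,0,0) = 160`: for `F9` the field with `9` elements, the number
of monic irreducible polynomials of degree `5` in `F9[x]` whose coefficients of `x⁴` and
`x` are both zero equals `160`. -/
theorem stmt14 (F9 : Type) [Field F9] [Fintype F9] (h9 : Fintype.card F9 = 9) :
    Nat.card {f : Polynomial F9 // f.Monic ∧ Irreducible f ∧ f.natDegree = 5 ∧
      f.coeff 4 = 0 ∧ f.coeff 1 = 0} = 160 := by
  have e : F9 ≃+* Fc := FiniteField.ringEquivOfCardEq (h9.trans Fc.card_eq.symm)
  have hmap : ∀ a0 a2 a3 : F9,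
      Polynomial.map (e : F9 →+* Fc) (pc a0 a2 a3) = pc (e a0) (e a2) (e a3) := by
    intro a0 a2 a3
    simp [pc, Polynomial.map_add, Polynomial.map_mul, Polynomial.map_pow]
  have eqv2 : {v : F9 × F9 × F9 // Irreducible (pc v.1 v.2.1 v.2.2)} ≃
      {v : Fc × Fc × Fc // Irreducible (pc v.1 v.2.1 v.2.2)} :=
    Equiv.subtypeEquiv (e.toEquiv.prodCongr (e.toEquiv.prodCongr e.toEquiv)) (by
      rintro ⟨a0, a2, a3⟩
      have h : Irreducible (pc a0 a2 a3) ↔ Irreducible (pc (e a0) (e a2) (e a3)) := by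
        rw [← hmap a0 a2 a3]
        exact (MulEquiv.irreducible_iff (Polynomial.mapEquiv e)).symm
      exact h)
  have eqv3 : {v : Fc × Fc × Fc // Irreducible (pc v.1 v.2.1 v.2.2)} ≃
      {v : Fc × Fc × Fc // Fc.D v} :=
    Equiv.subtypeEquivRight (by
      rintro ⟨a0, a2, a3⟩
      rw [pc_irred_iff]
      rfl)
  rw [Nat.card_congr (((quinticEquiv F9).trans eqv2).trans eqv3), Nat.card_eq_fintype_card]
  exact Fc.count
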